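/- arXiv:2405.12753 — 3 statements merged into one kernel-verified Lean document; each statement's English description precedes it below -/
import Mathlib

section
/- Let p > 2 and let p* = p/(p-1) be its conjugate exponent. Then for all s, t ∈ (0,1) and θ₁, θ₂ ∈ (0, π/2), the inequality 1 − (s^{1/2} t^{1/2} cos θ₁ + (1−s)^{1/2}(1−t)^{1/2} cos θ₂) ≤ (p/2) · (1 − (s^{1/p} t^{(p−1)/p} cos θ₁ + (1−s)^{1/p}(1−t)^{(p−1)/p} cos θ₂)) holds. -/
open Real Set

private lemma aux_rpow {a b : ℝ} (ha : 0 < a) (hb : 0 < b) (r : ℝ) :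
    b * (a / b) ^ r = a ^ r * b ^ (1 - r) := by
  have hbr : (0:ℝ) < b ^ r := rpow_pos_of_pos hb r
  rw [rpow_sub hb, rpow_one, div_rpow ha.le hb.le]
  field_simp

/-- For p > 2 : 1 − F_{B²} ≤ (p/2)(1 − F_{Ω_p}) on (0,1)² × (0,π/2)². -/
theorem stmt2 (p : ℝ) (hp : 2 < p)
    (s t θ₁ θ₂ : ℝ) (hs : s ∈ Ioo (0 : ℝ) 1) (ht : t ∈ Ioo (0 : ℝ) 1)
    (hθ₁ : θ₁ ∈ Ioo 0 (π / 2)) (hθ₂ : θ₂ ∈ Ioo 0 (π / 2)) :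
    1 - (s ^ ((1 : ℝ) / 2) * t ^ ((1 : ℝ) / 2) * Real.cos θ₁ +
        (1 - s) ^ ((1 : ℝ) / 2) * (1 - t) ^ ((1 : ℝ) / 2) * Real.cos θ₂) ≤
      (p / 2) * (1 - (s ^ (1 / p) * t ^ ((p - 1) / p) * Real.cos θ₁ +
        (1 - s) ^ (1 / p) * (1 - t) ^ ((p - 1) / p) * Real.cos θ₂)) := by
  obtain ⟨hs0, hs1⟩ := hs
  obtain ⟨ht0, ht1⟩ := ht
  have hs1' : (0:ℝ) < 1 - s := by linarith
  have ht1' : (0:ℝ) < 1 - t := by linarith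
  have hp0 : (0:ℝ) < p := by linarith
  have hc₁0 : 0 < Real.cos θ₁ := Real.cos_pos_of_mem_Ioo ⟨by linarith [hθ₁.1, pi_pos], hθ₁.2⟩
  have hc₂0 : 0 < Real.cos θ₂ := Real.cos_pos_of_mem_Ioo ⟨by linarith [hθ₂.1, pi_pos], hθ₂.2⟩
  have hc₁1 : Real.cos θ₁ ≤ 1 := Real.cos_le_one θ₁
  have hc₂1 : Real.cos θ₂ ≤ 1 := Real.cos_le_one θ₂
  set c₁ := Real.cos θ₁
  set c₂ := Real.cos θ₂
  set x : ℝ := (s / t) ^ (1 / p) with hxdef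
  set y : ℝ := ((1 - s) / (1 - t)) ^ (1 / p) with hydef
  have hx0 : 0 < x := rpow_pos_of_pos (div_pos hs0 ht0) _
  have hy0 : 0 < y := rpow_pos_of_pos (div_pos hs1' ht1') _
  -- identities
  have hid1 : s ^ (1 / p) * t ^ ((p - 1) / p) = t * x := by
    rw [hxdef, aux_rpow hs0 ht0]
    congr 1
    field_simp
  have hid2 : (1 - s) ^ (1 / p) * (1 - t) ^ ((p - 1) / p) = (1 - t) * y := by
    rw [hydef, aux_rpow hs1' ht1']
    congr 1
    field_simp
  have hxq : x ^ (p / 2) = (s / t) ^ ((1:ℝ) / 2) := by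
    rw [hxdef, ← rpow_mul (div_pos hs0 ht0).le]
    congr 1
    field_simp
  have hyq : y ^ (p / 2) = ((1 - s) / (1 - t)) ^ ((1:ℝ) / 2) := by
    rw [hydef, ← rpow_mul (div_pos hs1' ht1').le]
    congr 1
    field_simp
  have hid3 : s ^ ((1:ℝ) / 2) * t ^ ((1:ℝ) / 2) = t * x ^ (p / 2) := by
    rw [hxq, aux_rpow hs0 ht0]
    norm_num
  have hid4 : (1 - s) ^ ((1:ℝ) / 2) * (1 - t) ^ ((1:ℝ) / 2) = (1 - t) * y ^ (p / 2) := by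
    rw [hyq, aux_rpow hs1' ht1']
    norm_num
  rw [hid1, hid2, hid3, hid4]
  -- Bernoulli
  have bern1 : 1 + (p / 2) * (x - 1) ≤ x ^ (p / 2) := by
    have h := one_add_mul_self_le_rpow_one_add (s := x - 1) (by linarith) (p := p / 2)
      (by linarith)
    have hx1 : (1:ℝ) + (x - 1) = x := by ring
    rwa [hx1] at h
  have bern2 : 1 + (p / 2) * (y - 1) ≤ y ^ (p / 2) := by
    have h := one_add_mul_self_le_rpow_one_add (s := y - 1) (by linarith) (p := p / 2)
      (by linarith)
    have hy1 : (1:ℝ) + (y - 1) = y := by ring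
    rwa [hy1] at h
  have hT : t * c₁ + (1 - t) * c₂ ≤ 1 := by nlinarith
  have h1 : t * c₁ * (1 + (p / 2) * (x - 1)) ≤ t * c₁ * x ^ (p / 2) :=
    mul_le_mul_of_nonneg_left bern1 (by positivity)
  have h2 : (1 - t) * c₂ * (1 + (p / 2) * (y - 1)) ≤ (1 - t) * c₂ * y ^ (p / 2) :=
    mul_le_mul_of_nonneg_left bern2 (by positivity)
  nlinarith [mul_nonneg (by linarith : (0:ℝ) ≤ p / 2 - 1)
    (by linarith : (0:ℝ) ≤ 1 - (t * c₁ + (1 - t) * c₂))]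
end

section
/- For R > 0 and n ≥ 1, there exist constants C₁, C₂ > 0 (depending only on n and R) such that for all z ∈ ℂⁿ with ‖z‖ > 1, C₁ e^{2R‖z‖} ‖z‖^{-(n−1/2)} ≤ ∫_{∂B(0,R)} e^{2 Re⟨ζ, z⟩} dσ(ζ) ≤ C₂ e^{2R‖z‖} ‖z‖^{-(n−1/2)}, where σ is the surface area measure on the sphere ∂B(0,R) ⊂ ℂⁿ and ⟨ζ,z⟩ = ζ₁z₁ + ⋯ + ζₙzₙ. -/
open MeasureTheory Real Set
open scoped ENNReal NNReal

noncomputable instance euclideanComplexMeasurableSpace (n : ℕ) :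
    MeasurableSpace (EuclideanSpace ℂ (Fin n)) := borel _

instance euclideanComplexBorelSpace (n : ℕ) :
    BorelSpace (EuclideanSpace ℂ (Fin n)) := ⟨rfl⟩

set_option maxHeartbeats 1000000

namespace Stmt7Aux

lemma lip_forget (m : ℕ) : LipschitzWith 1 (WithLp.equiv 2 (Fin m → ℝ)) := by
  apply LipschitzWith.of_dist_le_mul
  intro x y
  rw [NNReal.coe_one, one_mul]
  refine (dist_pi_le_iff dist_nonneg).2 fun i => ?_
  rw [EuclideanSpace.dist_eq x y]
  have h1 : dist (x i) (y i) ^ 2 ≤ ∑ j, dist (x j) (y j) ^ 2 :=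
    Finset.single_le_sum (f := fun j => dist (x j) (y j) ^ 2)
      (fun j _ => sq_nonneg _) (Finset.mem_univ i)
  calc dist ((WithLp.equiv 2 _) x i) ((WithLp.equiv 2 _) y i)
      = Real.sqrt (dist (x i) (y i) ^ 2) := by
        rw [Real.sqrt_sq dist_nonneg]; rfl
    _ ≤ _ := Real.sqrt_le_sqrt h1

lemma antilip_forget (m : ℕ) :
    AntilipschitzWith (Real.toNNReal (Real.sqrt m)) (WithLp.equiv 2 (Fin m → ℝ)) := by
  apply AntilipschitzWith.of_le_mul_dist
  intro x y
  rw [Real.coe_toNNReal _ (Real.sqrt_nonneg _)]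
  rw [EuclideanSpace.dist_eq x y]
  have h1 : ∀ i, dist (x i) (y i) ^ 2 ≤ dist ((WithLp.equiv 2 _) x) ((WithLp.equiv 2 _) y) ^ 2 := by
    intro i
    have := dist_le_pi_dist ((WithLp.equiv 2 (Fin m → ℝ)) x) ((WithLp.equiv 2 (Fin m → ℝ)) y) i
    exact pow_le_pow_left₀ dist_nonneg this 2
  calc Real.sqrt (∑ i, dist (x i) (y i) ^ 2)
      ≤ Real.sqrt (∑ _i : Fin m, dist ((WithLp.equiv 2 _) x) ((WithLp.equiv 2 _) y) ^ 2) :=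
        Real.sqrt_le_sqrt (Finset.sum_le_sum fun i _ => h1 i)
    _ = Real.sqrt ((m : ℝ) * dist ((WithLp.equiv 2 _) x) ((WithLp.equiv 2 _) y) ^ 2) := by
        rw [Finset.sum_const, Finset.card_univ, Fintype.card_fin, nsmul_eq_mul]
    _ ≤ Real.sqrt m * dist ((WithLp.equiv 2 _) x) ((WithLp.equiv 2 _) y) := by
        rw [Real.sqrt_mul (Nat.cast_nonneg m), Real.sqrt_sq dist_nonneg]

lemma ball_upper (m : ℕ) {s : ℝ} (hs : 0 ≤ s) :
    μH[(m : ℝ)] (Metric.closedBall (0 : EuclideanSpace ℝ (Fin m)) s) ≤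
      ENNReal.ofReal ((2 * Real.sqrt m * s) ^ m) := by
  have h1 := (antilip_forget m).le_hausdorffMeasure_image (d := (m:ℝ)) (Nat.cast_nonneg m)
    (Metric.closedBall (0 : EuclideanSpace ℝ (Fin m)) s)
  have himg : (WithLp.equiv 2 (Fin m → ℝ)) '' Metric.closedBall 0 s ⊆
      Metric.closedBall (0 : Fin m → ℝ) s := by
    rintro _ ⟨x, hx, rfl⟩
    rw [Metric.mem_closedBall] at hx ⊢
    calc dist ((WithLp.equiv 2 (Fin m → ℝ)) x) 0
        = dist ((WithLp.equiv 2 (Fin m → ℝ)) x) ((WithLp.equiv 2 (Fin m → ℝ)) 0) := by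
          congr 1
      _ ≤ 1 * dist x 0 := (lip_forget m).dist_le_mul x 0
      _ ≤ s := by simpa using hx
  have h2 : μH[(m : ℝ)] ((WithLp.equiv 2 (Fin m → ℝ)) '' Metric.closedBall 0 s) ≤
      ENNReal.ofReal ((2 * s) ^ m) := by
    refine le_trans (measure_mono himg) ?_
    have hcard : ((Fintype.card (Fin m) : ℕ) : ℝ) = (m : ℝ) := by simp
    rw [← hcard, hausdorffMeasure_pi_real]
    rw [Real.volume_pi_closedBall 0 hs]
    simp
  calc μH[(m : ℝ)] (Metric.closedBall (0 : EuclideanSpace ℝ (Fin m)) s)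
      ≤ (Real.toNNReal (Real.sqrt m) : ℝ≥0∞) ^ (m : ℝ) *
          μH[(m : ℝ)] ((WithLp.equiv 2 (Fin m → ℝ)) '' Metric.closedBall 0 s) := h1
    _ ≤ (Real.toNNReal (Real.sqrt m) : ℝ≥0∞) ^ (m : ℝ) * ENNReal.ofReal ((2 * s) ^ m) :=
        mul_le_mul_right h2 _
    _ = ENNReal.ofReal ((2 * Real.sqrt m * s) ^ m) := by
        rw [ENNReal.rpow_natCast]
        rw [show ((Real.toNNReal (Real.sqrt m) : ℝ≥0∞)) = ENNReal.ofReal (Real.sqrt m) from rfl]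
        rw [← ENNReal.ofReal_pow (Real.sqrt_nonneg _), ← ENNReal.ofReal_mul (by positivity)]
        rw [← mul_pow]
        ring_nf

lemma ball_lower (m : ℕ) (hm : 0 < m) {s : ℝ} (hs : 0 ≤ s) :
    ENNReal.ofReal ((2 * s / Real.sqrt m) ^ m) ≤
      μH[(m : ℝ)] (Metric.closedBall (0 : EuclideanSpace ℝ (Fin m)) s) := by
  have hsm : (0:ℝ) < Real.sqrt m := Real.sqrt_pos.2 (by exact_mod_cast hm)
  set r : ℝ := s / Real.sqrt m with hr
  have hr0 : 0 ≤ r := by positivity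
  have hsub : Metric.closedBall (0 : Fin m → ℝ) r ⊆
      (WithLp.equiv 2 (Fin m → ℝ)) '' Metric.closedBall (0 : EuclideanSpace ℝ (Fin m)) s := by
    intro y hy
    refine ⟨(WithLp.equiv 2 (Fin m → ℝ)).symm y, ?_, by simp⟩
    rw [Metric.mem_closedBall] at hy ⊢
    have h1 : dist ((WithLp.equiv 2 (Fin m → ℝ)).symm y) 0 ≤ Real.sqrt m * dist y 0 := by
      have := (antilip_forget m).le_mul_dist ((WithLp.equiv 2 (Fin m → ℝ)).symm y)
        ((WithLp.equiv 2 (Fin m → ℝ)).symm 0)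
      simp only [Equiv.apply_symm_apply] at this
      rw [Real.coe_toNNReal _ (Real.sqrt_nonneg _)] at this
      simpa using this
    calc dist ((WithLp.equiv 2 (Fin m → ℝ)).symm y) 0 ≤ Real.sqrt m * dist y 0 := h1
      _ ≤ Real.sqrt m * r := by
          exact mul_le_mul_of_nonneg_left hy (Real.sqrt_nonneg _)
      _ = s := by
          rw [hr, mul_div_cancel₀ _ (ne_of_gt hsm)]
  have h2 : μH[(m : ℝ)]
      ((WithLp.equiv 2 (Fin m → ℝ)) '' Metric.closedBall (0 : EuclideanSpace ℝ (Fin m)) s) ≤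
      μH[(m : ℝ)] (Metric.closedBall (0 : EuclideanSpace ℝ (Fin m)) s) := by
    have := (lip_forget m).hausdorffMeasure_image_le (d := (m:ℝ)) (by positivity)
      (Metric.closedBall (0 : EuclideanSpace ℝ (Fin m)) s)
    simpa using this
  calc ENNReal.ofReal ((2 * s / Real.sqrt m) ^ m)
      = μH[(m : ℝ)] (Metric.closedBall (0 : Fin m → ℝ) r) := by
        have hcard : ((Fintype.card (Fin m) : ℕ) : ℝ) = (m : ℝ) := by simp
        rw [← hcard, hausdorffMeasure_pi_real, Real.volume_pi_closedBall 0 hr0,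
          Fintype.card_fin]
        congr 1
        rw [hr]; ring
    _ ≤ μH[(m : ℝ)]
        ((WithLp.equiv 2 (Fin m → ℝ)) '' Metric.closedBall (0 : EuclideanSpace ℝ (Fin m)) s) :=
        measure_mono hsub
    _ ≤ _ := h2



/-- prepend a coordinate -/
noncomputable def consE (m : ℕ) (a : ℝ) (y : EuclideanSpace ℝ (Fin m)) :
    EuclideanSpace ℝ (Fin (m + 1)) :=
  (WithLp.equiv 2 (Fin (m + 1) → ℝ)).symm (Fin.cons a ((WithLp.equiv 2 (Fin m → ℝ)) y))

/-- drop the first coordinate -/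
noncomputable def tailE (m : ℕ) (x : EuclideanSpace ℝ (Fin (m + 1))) :
    EuclideanSpace ℝ (Fin m) :=
  (WithLp.equiv 2 (Fin m → ℝ)).symm (fun i => x i.succ)

@[simp] lemma consE_zero (m : ℕ) (a : ℝ) (y : EuclideanSpace ℝ (Fin m)) :
    consE m a y 0 = a := rfl

@[simp] lemma consE_succ (m : ℕ) (a : ℝ) (y : EuclideanSpace ℝ (Fin m)) (i : Fin m) :
    consE m a y i.succ = y i := rfl

@[simp] lemma tailE_apply (m : ℕ) (x : EuclideanSpace ℝ (Fin (m + 1))) (i : Fin m) :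
    tailE m x i = x i.succ := rfl

lemma norm_sq_eq_of_mem (m : ℕ) (x : EuclideanSpace ℝ (Fin (m + 1))) :
    ‖x‖ ^ 2 = x 0 ^ 2 + ‖tailE m x‖ ^ 2 := by
  have h1 : ‖x‖ ^ 2 = ∑ i, ‖x i‖ ^ 2 := by
    rw [EuclideanSpace.norm_eq, Real.sq_sqrt (Finset.sum_nonneg fun i _ => sq_nonneg _)]
  have h2 : ‖tailE m x‖ ^ 2 = ∑ i : Fin m, ‖x i.succ‖ ^ 2 := by
    rw [EuclideanSpace.norm_eq, Real.sq_sqrt (Finset.sum_nonneg fun i _ => sq_nonneg _)]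
    simp
  rw [h1, Fin.sum_univ_succ, h2]
  simp [Real.norm_eq_abs, sq_abs]

lemma norm_consE (m : ℕ) (a : ℝ) (y : EuclideanSpace ℝ (Fin m)) :
    ‖consE m a y‖ ^ 2 = a ^ 2 + ‖y‖ ^ 2 := by
  have := norm_sq_eq_of_mem m (consE m a y)
  have h2 : tailE m (consE m a y) = y := by
    ext i
    simp
  rw [h2] at this
  simpa using this

/-- spherical cap of depth `δ` in direction of the 0-th coordinate -/
def capV (m : ℕ) (R δ : ℝ) : Set (EuclideanSpace ℝ (Fin (m + 1))) :=
  {x | ‖x‖ = R ∧ R - R * δ ≤ x 0}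

lemma capV_upper (m : ℕ) {R δ : ℝ} (hR : 0 < R) (hδ : 0 < δ) (hδ' : δ ≤ 1 / 4) :
    μH[(m : ℝ)] (capV m R δ) ≤
      ENNReal.ofReal ((8 * R * Real.sqrt m * Real.sqrt δ) ^ m) := by
  set s : ℝ := R * Real.sqrt (2 * δ) with hs_def
  have hs0 : 0 < s := by
    apply mul_pos hR
    exact Real.sqrt_pos.2 (by linarith)
  have hs_sq : s ^ 2 = R ^ 2 * (2 * δ) := by
    rw [hs_def, mul_pow, Real.sq_sqrt (by linarith)]
  have hs_le : 2 * s ^ 2 ≤ R ^ 2 := by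
    rw [hs_sq]; nlinarith
  -- the graph map
  set g : EuclideanSpace ℝ (Fin m) → EuclideanSpace ℝ (Fin (m + 1)) :=
    fun y => consE m (Real.sqrt (R ^ 2 - ‖y‖ ^ 2)) y with hg_def
  set B : Set (EuclideanSpace ℝ (Fin m)) := Metric.closedBall 0 s with hB_def
  -- cap is contained in the image of the ball
  have hsub : capV m R δ ⊆ g '' B := by
    rintro x ⟨hxn, hx0⟩
    have ha0 : 0 ≤ x 0 := by nlinarith
    have hy : ‖tailE m x‖ ^ 2 = R ^ 2 - x 0 ^ 2 := by
      have := norm_sq_eq_of_mem m x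
      rw [hxn] at this; linarith
    have hyB : tailE m x ∈ B := by
      rw [hB_def, Metric.mem_closedBall, dist_zero_right]
      have h1 : ‖tailE m x‖ ^ 2 ≤ s ^ 2 := by
        rw [hy, hs_sq]
        have hu : (0:ℝ) ≤ R - R * δ := by nlinarith
        have hsq : (R - R * δ) * (R - R * δ) ≤ x 0 * x 0 := mul_le_mul hx0 hx0 hu ha0
        nlinarith [sq_nonneg (R * δ)]
      nlinarith [norm_nonneg (tailE m x), hs0]
    refine ⟨tailE m x, hyB, ?_⟩
    have hx0' : Real.sqrt (R ^ 2 - ‖tailE m x‖ ^ 2) = x 0 := by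
      rw [hy]
      have : R ^ 2 - (R ^ 2 - x 0 ^ 2) = x 0 ^ 2 := by ring
      rw [this, Real.sqrt_sq ha0]
    ext i
    refine Fin.cases ?_ (fun j => ?_) i
    · rw [hg_def]; simp [hx0']
    · rw [hg_def]; simp
  -- the graph map is 2-Lipschitz on the ball
  have hlip : LipschitzOnWith 2 g B := by
    apply LipschitzOnWith.of_dist_le_mul
    intro y hy y' hy'
    rw [hB_def, Metric.mem_closedBall, dist_zero_right] at hy hy'
    have hRy : R ^ 2 - ‖y‖ ^ 2 ≥ s ^ 2 := by nlinarith [norm_nonneg y]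
    have hRy' : R ^ 2 - ‖y'‖ ^ 2 ≥ s ^ 2 := by nlinarith [norm_nonneg y']
    set a := Real.sqrt (R ^ 2 - ‖y‖ ^ 2) with ha_def
    set b := Real.sqrt (R ^ 2 - ‖y'‖ ^ 2) with hb_def
    have ha_sq : a ^ 2 = R ^ 2 - ‖y‖ ^ 2 := Real.sq_sqrt (by nlinarith [sq_nonneg s])
    have hb_sq : b ^ 2 = R ^ 2 - ‖y'‖ ^ 2 := Real.sq_sqrt (by nlinarith [sq_nonneg s])
    have ha_ge : s ≤ a := by
      rw [ha_def]
      calc s = Real.sqrt (s ^ 2) := (Real.sqrt_sq hs0.le).symm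
        _ ≤ _ := Real.sqrt_le_sqrt (by linarith)
    have hb_ge : s ≤ b := by
      rw [hb_def]
      calc s = Real.sqrt (s ^ 2) := (Real.sqrt_sq hs0.le).symm
        _ ≤ _ := Real.sqrt_le_sqrt (by linarith)
    have hab_pos : 0 < a + b := by linarith
    -- |a - b| ≤ dist y y'
    have key : (a - b) * (a + b) = ‖y'‖ ^ 2 - ‖y‖ ^ 2 := by nlinarith
    have habs : |a - b| ≤ dist y y' := by
      have e1 : |a - b| * (a + b) = |‖y'‖ ^ 2 - ‖y‖ ^ 2| := by
        rw [← key, abs_mul, abs_of_pos hab_pos]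
      have e2 : |‖y'‖ ^ 2 - ‖y‖ ^ 2| ≤ dist y y' * (a + b) := by
        have f1 : |‖y'‖ ^ 2 - ‖y‖ ^ 2| = |‖y'‖ - ‖y‖| * (‖y'‖ + ‖y‖) := by
          rw [← abs_of_nonneg (by positivity : (0:ℝ) ≤ ‖y'‖ + ‖y‖), ← abs_mul]
          congr 1; ring
        have f2 : |‖y'‖ - ‖y‖| ≤ dist y y' := by
          rw [dist_eq_norm]
          have := abs_norm_sub_norm_le y' y
          rw [show ‖y' - y‖ = ‖y - y'‖ from norm_sub_rev y' y] at this
          exact this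
        have f3 : ‖y'‖ + ‖y‖ ≤ a + b := by linarith
        calc |‖y'‖ ^ 2 - ‖y‖ ^ 2| = |‖y'‖ - ‖y‖| * (‖y'‖ + ‖y‖) := f1
          _ ≤ dist y y' * (a + b) := by
              apply mul_le_mul f2 f3 (by positivity) dist_nonneg
      have := e1.trans_le e2
      exact le_of_mul_le_mul_right this hab_pos
    -- now the distance bound
    have hdV : dist (g y) (g y') ^ 2 = |a - b| ^ 2 + dist y y' ^ 2 := by
      rw [EuclideanSpace.dist_eq, Real.sq_sqrt (Finset.sum_nonneg fun i _ => sq_nonneg _)]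
      rw [Fin.sum_univ_succ]
      have hd0 : dist (g y 0) (g y' 0) = |a - b| := by
        rw [hg_def]; simp [Real.dist_eq, ha_def, hb_def]
      have hA : dist y y' ^ 2 = ∑ i : Fin m, dist (y i) (y' i) ^ 2 := by
        rw [EuclideanSpace.dist_eq, Real.sq_sqrt (Finset.sum_nonneg fun i _ => sq_nonneg _)]
      rw [hd0, hA]
      rfl
    have : dist (g y) (g y') ^ 2 ≤ (2 * dist y y') ^ 2 := by
      rw [hdV]
      have : |a - b| ^ 2 ≤ dist y y' ^ 2 := by
        apply sq_le_sq' _ habs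
        linarith [abs_nonneg (a - b), habs]
      nlinarith [dist_nonneg (x := y) (y := y')]
    have h2d : (0:ℝ) ≤ 2 * dist y y' := by positivity
    calc dist (g y) (g y') = Real.sqrt (dist (g y) (g y') ^ 2) :=
          (Real.sqrt_sq dist_nonneg).symm
      _ ≤ Real.sqrt ((2 * dist y y') ^ 2) := Real.sqrt_le_sqrt this
      _ = 2 * dist y y' := Real.sqrt_sq h2d
      _ = (2 : ℝ≥0) * dist y y' := by norm_num
  -- put everything together
  have h1 : μH[(m : ℝ)] (capV m R δ) ≤ μH[(m : ℝ)] (g '' B) := measure_mono hsub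
  have h2 : μH[(m : ℝ)] (g '' B) ≤ ((2 : ℝ≥0) : ℝ≥0∞) ^ (m : ℝ) * μH[(m : ℝ)] B :=
    hlip.hausdorffMeasure_image_le (Nat.cast_nonneg m)
  have h3 : μH[(m : ℝ)] B ≤ ENNReal.ofReal ((2 * Real.sqrt m * s) ^ m) := ball_upper m hs0.le
  calc μH[(m : ℝ)] (capV m R δ) ≤ ((2 : ℝ≥0) : ℝ≥0∞) ^ (m : ℝ) * μH[(m : ℝ)] B :=
        h1.trans h2
    _ ≤ ((2 : ℝ≥0) : ℝ≥0∞) ^ (m : ℝ) * ENNReal.ofReal ((2 * Real.sqrt m * s) ^ m) :=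
        mul_le_mul_right h3 _
    _ ≤ ENNReal.ofReal ((8 * R * Real.sqrt m * Real.sqrt δ) ^ m) := by
        rw [ENNReal.rpow_natCast]
        have e4 : ((2 : ℝ≥0) : ℝ≥0∞) = ENNReal.ofReal 2 := by simp
        rw [e4, ← ENNReal.ofReal_pow (by norm_num), ← ENNReal.ofReal_mul (by positivity)]
        apply ENNReal.ofReal_le_ofReal
        rw [← mul_pow]
        apply pow_le_pow_left₀ (by positivity)
        have hsqrt2 : Real.sqrt 2 ≤ 2 := by
          nlinarith [Real.sq_sqrt (by norm_num : (0:ℝ) ≤ 2), Real.sqrt_nonneg 2]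
        have : s = R * (Real.sqrt 2 * Real.sqrt δ) := by
          rw [hs_def, ← Real.sqrt_mul (by norm_num)]
        rw [this]
        have h0 : 0 ≤ Real.sqrt m := Real.sqrt_nonneg _
        have h1 : 0 ≤ Real.sqrt δ := Real.sqrt_nonneg _
        nlinarith [Real.sqrt_nonneg (2:ℝ), hR.le, mul_nonneg h0 h1,
          mul_nonneg (mul_nonneg hR.le h0) h1]

lemma capV_lower (m : ℕ) (hm : 0 < m) {R δ : ℝ} (hR : 0 < R) (hδ : 0 < δ) (hδ' : δ ≤ 1) :
    ENNReal.ofReal ((2 * R / Real.sqrt m) ^ m * Real.sqrt δ ^ m) ≤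
      μH[(m : ℝ)] (capV m R δ) := by
  set r : ℝ := R * Real.sqrt δ with hr_def
  have hr0 : 0 < r := mul_pos hR (Real.sqrt_pos.2 hδ)
  have hrR : r ≤ R := by
    have h1 : Real.sqrt δ ≤ 1 := Real.sqrt_le_one.2 hδ'
    rw [hr_def]
    nlinarith
  have hr_sq : r ^ 2 = R ^ 2 * δ := by
    rw [hr_def, mul_pow, Real.sq_sqrt hδ.le]
  -- projection
  set P : EuclideanSpace ℝ (Fin (m + 1)) → EuclideanSpace ℝ (Fin m) := tailE m with hP_def
  have hlipP : LipschitzWith 1 P := by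
    apply LipschitzWith.of_dist_le_mul
    intro x x'
    rw [NNReal.coe_one, one_mul]
    have h1 : dist (P x) (P x') ^ 2 ≤ dist x x' ^ 2 := by
      have e1 : dist (P x) (P x') ^ 2 = ∑ i : Fin m, dist (x i.succ) (x' i.succ) ^ 2 := by
        rw [EuclideanSpace.dist_eq, Real.sq_sqrt (Finset.sum_nonneg fun i _ => sq_nonneg _)]
        rfl
      have e2 : dist x x' ^ 2 = ∑ i, dist (x i) (x' i) ^ 2 := by
        rw [EuclideanSpace.dist_eq, Real.sq_sqrt (Finset.sum_nonneg fun i _ => sq_nonneg _)]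
      rw [e1, e2, Fin.sum_univ_succ]
      have : (0:ℝ) ≤ dist (x 0) (x' 0) ^ 2 := sq_nonneg _
      linarith
    calc dist (P x) (P x') = Real.sqrt (dist (P x) (P x') ^ 2) :=
          (Real.sqrt_sq dist_nonneg).symm
      _ ≤ Real.sqrt (dist x x' ^ 2) := Real.sqrt_le_sqrt h1
      _ = dist x x' := Real.sqrt_sq dist_nonneg
  -- ball inside projection of cap
  have hsub : Metric.closedBall (0 : EuclideanSpace ℝ (Fin m)) r ⊆ P '' capV m R δ := by
    intro y hy
    rw [Metric.mem_closedBall, dist_zero_right] at hy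
    set a : ℝ := Real.sqrt (R ^ 2 - ‖y‖ ^ 2) with ha_def
    have hy2 : ‖y‖ ^ 2 ≤ r ^ 2 := by nlinarith [norm_nonneg y]
    have hRy : 0 ≤ R ^ 2 - ‖y‖ ^ 2 := by nlinarith
    refine ⟨consE m a y, ⟨?_, ?_⟩, ?_⟩
    · have := norm_consE m a y
      have ha_sq : a ^ 2 = R ^ 2 - ‖y‖ ^ 2 := Real.sq_sqrt hRy
      have : ‖consE m a y‖ ^ 2 = R ^ 2 := by rw [norm_consE, ha_sq]; ring
      nlinarith [norm_nonneg (consE m a y), hR]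
    · rw [consE_zero]
      have h1 : R ^ 2 * (1 - δ) ≤ R ^ 2 - ‖y‖ ^ 2 := by nlinarith
      have h2 : Real.sqrt (R ^ 2 * (1 - δ)) ≤ a := Real.sqrt_le_sqrt h1
      have h3 : R - R * δ ≤ Real.sqrt (R ^ 2 * (1 - δ)) := by
        have hd1 : (0:ℝ) ≤ 1 - δ := by linarith
        rw [Real.sqrt_mul (by positivity), Real.sqrt_sq hR.le]
        have h4 : 1 - δ ≤ Real.sqrt (1 - δ) := by
          nlinarith [Real.sq_sqrt hd1, Real.sqrt_nonneg (1 - δ)]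
        nlinarith
      linarith
    · ext i
      simp [hP_def]
  -- conclude
  have h1 : μH[(m : ℝ)] (P '' capV m R δ) ≤ μH[(m : ℝ)] (capV m R δ) := by
    have := hlipP.hausdorffMeasure_image_le (d := (m : ℝ)) (Nat.cast_nonneg m) (capV m R δ)
    simpa using this
  calc ENNReal.ofReal ((2 * R / Real.sqrt m) ^ m * Real.sqrt δ ^ m)
      = ENNReal.ofReal ((2 * r / Real.sqrt m) ^ m) := by
        congr 1
        rw [← mul_pow, hr_def]
        congr 1
        ring
    _ ≤ μH[(m : ℝ)] (Metric.closedBall (0 : EuclideanSpace ℝ (Fin m)) r) :=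
        ball_lower m hm hr0.le
    _ ≤ μH[(m : ℝ)] (P '' capV m R δ) := measure_mono hsub
    _ ≤ _ := h1

end Stmt7Aux

namespace Stmt7Aux

/-- spherical cap in `ℂⁿ` viewed as a real inner product space -/
def capG (n : ℕ) (e : EuclideanSpace ℂ (Fin n)) (R δ : ℝ) : Set (EuclideanSpace ℂ (Fin n)) :=
  {v | ‖v‖ = R ∧ R - R * δ ≤ (inner (𝕜 := ℝ) e v : ℝ)}

lemma finrank_G (n : ℕ) : Module.finrank ℝ (EuclideanSpace ℂ (Fin n)) = 2 * n := by
  rw [(WithLp.linearEquiv 2 ℝ (Fin n → ℂ)).finrank_eq, Module.finrank_pi_fintype,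
    Finset.sum_congr rfl fun i _ => Complex.finrank_real_complex]
  simp [Finset.sum_const, mul_comm]

lemma capG_measure (n m : ℕ) (hm : m + 1 = 2 * n) (e : EuclideanSpace ℂ (Fin n))
    (he : ‖e‖ = 1) (R δ : ℝ) :
    μH[(m : ℝ)] (capG n e R δ) = μH[(m : ℝ)] (capV m R δ) := by
  have hfr : Module.finrank ℝ (EuclideanSpace ℂ (Fin n)) = Fintype.card (Fin (m + 1)) := by
    rw [Fintype.card_fin, hm, finrank_G]
  have horth : Orthonormal ℝ (({0} : Set (Fin (m + 1))).restrict
      (fun _ => e : Fin (m + 1) → EuclideanSpace ℂ (Fin n))) := by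
    refine ⟨fun i => he, ?_⟩
    intro i j hij
    exfalso
    apply hij
    have hi := i.2
    have hj := j.2
    simp only [Set.mem_singleton_iff] at hi hj
    exact Subtype.ext (hi.trans hj.symm)
  obtain ⟨b, hb⟩ := horth.exists_orthonormalBasis_extension_of_card_eq hfr
  have hb0 : b 0 = e := hb 0 rfl
  set Φ := b.repr with hΦ
  have hcoord : ∀ v : EuclideanSpace ℂ (Fin n), (Φ v) 0 = (inner (𝕜 := ℝ) e v : ℝ) := by
    intro v
    have h1 := Φ.inner_map_map e v
    rw [← h1]
    have h2 : Φ e = EuclideanSpace.single 0 (1 : ℝ) := by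
      rw [← hb0, hΦ]
      exact b.repr_self 0
    rw [h2, EuclideanSpace.inner_single_left]
    simp
  have himg : Φ '' capG n e R δ = capV m R δ := by
    ext x
    constructor
    · rintro ⟨v, ⟨hv1, hv2⟩, rfl⟩
      refine ⟨?_, ?_⟩
      · rw [Φ.norm_map, hv1]
      · rw [hcoord v]; exact hv2
    · rintro ⟨hx1, hx2⟩
      refine ⟨Φ.symm x, ⟨?_, ?_⟩, Φ.apply_symm_apply x⟩
      · rw [← Φ.symm.norm_map x] at hx1
        exact hx1
      · rw [← hcoord (Φ.symm x), Φ.apply_symm_apply]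
        exact hx2
  rw [← himg]
  exact (Φ.isometry.hausdorffMeasure_image (Or.inl (Nat.cast_nonneg m)) _).symm

lemma sphere_cap_cover (n : ℕ) {R : ℝ} (hR : 0 < R) (u : EuclideanSpace ℂ (Fin n))
    (hu : ‖u‖ = R) :
    Metric.sphere (0 : EuclideanSpace ℂ (Fin n)) R ∩ Metric.closedBall u (R / 2) ⊆
      capG n (R⁻¹ • u) R (1 / 8) := by
  rintro v ⟨hv1, hv2⟩
  rw [mem_sphere_zero_iff_norm] at hv1
  rw [Metric.mem_closedBall, dist_eq_norm] at hv2
  refine ⟨hv1, ?_⟩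
  have hvu : ‖v - u‖ ^ 2 = ‖v‖ ^ 2 - 2 * (inner (𝕜 := ℝ) v u : ℝ) + ‖u‖ ^ 2 :=
    norm_sub_sq_real v u
  have h1 : (inner (𝕜 := ℝ) v u : ℝ) ≥ R ^ 2 - R ^ 2 / 8 := by
    have h2 : ‖v - u‖ ^ 2 ≤ (R / 2) ^ 2 := by
      apply sq_le_sq' _ hv2
      have := norm_nonneg (v - u)
      linarith
    rw [hv1, hu] at hvu
    nlinarith
  rw [real_inner_smul_left, real_inner_comm]
  have hRinv : 0 < R⁻¹ := inv_pos.2 hR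
  calc R - R * (1 / 8) = R⁻¹ * (R ^ 2 - R ^ 2 / 8) := by
        field_simp
    _ ≤ R⁻¹ * (inner (𝕜 := ℝ) v u : ℝ) := by
        exact mul_le_mul_of_nonneg_left h1 hRinv.le

lemma sphere_meas_fin (n m : ℕ) (hm : m + 1 = 2 * n) {R : ℝ} (hR : 0 < R) :
    μH[(m : ℝ)] (Metric.sphere (0 : EuclideanSpace ℂ (Fin n)) R) < ⊤ := by
  set S := Metric.sphere (0 : EuclideanSpace ℂ (Fin n)) R with hS
  have hcomp : IsCompact S := isCompact_sphere 0 R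
  have hcover : S ⊆ ⋃ u : S, Metric.ball (u : EuclideanSpace ℂ (Fin n)) (R / 2) := by
    intro x hx
    exact Set.mem_iUnion.2 ⟨⟨x, hx⟩, Metric.mem_ball_self (by linarith)⟩
  obtain ⟨t, ht⟩ := hcomp.elim_finite_subcover
    (fun u : S => Metric.ball (u : EuclideanSpace ℂ (Fin n)) (R / 2))
    (fun _ => Metric.isOpen_ball) hcover
  have hsub : S ⊆ ⋃ u ∈ t, S ∩ Metric.ball (u : EuclideanSpace ℂ (Fin n)) (R / 2) := by
    intro x hx
    obtain ⟨u, hu1, hu2⟩ := Set.mem_iUnion₂.1 (ht hx)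
    exact Set.mem_iUnion₂.2 ⟨u, hu1, hx, hu2⟩
  have hcap : ∀ u : S, μH[(m : ℝ)] (S ∩ Metric.ball (u : EuclideanSpace ℂ (Fin n)) (R / 2)) ≤
      ENNReal.ofReal ((8 * R * Real.sqrt m * Real.sqrt (1 / 8)) ^ m) := by
    intro u
    have hu : ‖(u : EuclideanSpace ℂ (Fin n))‖ = R := by
      have := u.2
      rwa [mem_sphere_zero_iff_norm] at this
    have h1 : S ∩ Metric.ball (u : EuclideanSpace ℂ (Fin n)) (R / 2) ⊆
        capG n (R⁻¹ • (u : EuclideanSpace ℂ (Fin n))) R (1 / 8) := by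
      refine Set.Subset.trans ?_ (sphere_cap_cover n hR u hu)
      exact Set.inter_subset_inter_right _ Metric.ball_subset_closedBall
    have hnorm : ‖R⁻¹ • (u : EuclideanSpace ℂ (Fin n))‖ = 1 := by
      rw [norm_smul, hu, norm_inv, Real.norm_eq_abs, abs_of_pos hR, inv_mul_cancel₀ hR.ne']
    calc μH[(m : ℝ)] (S ∩ Metric.ball (u : EuclideanSpace ℂ (Fin n)) (R / 2))
        ≤ μH[(m : ℝ)] (capG n (R⁻¹ • (u : EuclideanSpace ℂ (Fin n))) R (1 / 8)) :=
          measure_mono h1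
      _ = μH[(m : ℝ)] (capV m R (1 / 8)) := capG_measure n m hm _ hnorm R (1 / 8)
      _ ≤ _ := capV_upper m hR (by norm_num) (by norm_num)
  calc μH[(m : ℝ)] S
      ≤ μH[(m : ℝ)] (⋃ u ∈ t, S ∩ Metric.ball (u : EuclideanSpace ℂ (Fin n)) (R / 2)) :=
        measure_mono hsub
    _ ≤ ∑ u ∈ t, μH[(m : ℝ)] (S ∩ Metric.ball (u : EuclideanSpace ℂ (Fin n)) (R / 2)) :=
        measure_biUnion_finset_le _ _
    _ < ⊤ := by
        apply ENNReal.sum_lt_top.2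
        intro u _
        exact lt_of_le_of_lt (hcap u) ENNReal.ofReal_lt_top

end Stmt7Aux

open scoped ComplexConjugate

/-- Sharp asymptotics of the exponential integral over the sphere of radius R
in ℂⁿ (with surface measure given by the (2n−1)-dimensional Hausdorff measure). -/
theorem stmt7 (n : ℕ) (hn : 1 ≤ n) (R : ℝ) (hR : 0 < R) :
    ∃ C₁ C₂ : ℝ, 0 < C₁ ∧ 0 < C₂ ∧
      ∀ z : EuclideanSpace ℂ (Fin n), 1 < ‖z‖ →
        C₁ * Real.exp (2 * R * ‖z‖) * ‖z‖ ^ (-((n : ℝ) - 1 / 2)) ≤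
          (∫ ζ in Metric.sphere (0 : EuclideanSpace ℂ (Fin n)) R,
            Real.exp (2 * (∑ i, ζ i * z i).re) ∂(μH[(2 * n - 1 : ℝ)])) ∧
        (∫ ζ in Metric.sphere (0 : EuclideanSpace ℂ (Fin n)) R,
            Real.exp (2 * (∑ i, ζ i * z i).re) ∂(μH[(2 * n - 1 : ℝ)])) ≤
          C₂ * Real.exp (2 * R * ‖z‖) * ‖z‖ ^ (-((n : ℝ) - 1 / 2)) := by
  classical
  set m : ℕ := 2 * n - 1 with hm_def
  have hm1 : m + 1 = 2 * n := by omega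
  have hm_pos : 0 < m := by omega
  have hmR : (2 * (n : ℝ) - 1) = (m : ℝ) := by
    have h := hm1
    have : ((m : ℕ) : ℝ) + 1 = 2 * (n : ℝ) := by exact_mod_cast congrArg (fun k : ℕ => (k : ℝ)) h
    linarith
  have hsqm : (0:ℝ) < Real.sqrt m := Real.sqrt_pos.2 (by exact_mod_cast hm_pos)
  set S := Metric.sphere (0 : EuclideanSpace ℂ (Fin n)) R with hS_def
  -- constants
  set Cl : ℝ := (2 * R / Real.sqrt m) ^ m with hCl_def
  have hCl : 0 < Cl := pow_pos (by positivity) m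
  set Cu : ℝ := (8 * R * Real.sqrt m) ^ m with hCu_def
  have hCu : 0 < Cu := pow_pos (by positivity) m
  have hSfin : μH[(m : ℝ)] S < ⊤ := Stmt7Aux.sphere_meas_fin n m hm1 hR
  set sS : ℝ := (μH[(m : ℝ)] S).toReal with hsS_def
  have hsS0 : 0 ≤ sS := ENNReal.toReal_nonneg
  set D : ℝ := Cu + sS * 2 ^ m with hD_def
  have hD : 0 < D := by positivity
  -- the summable series
  set rr : ℝ := Real.exp (-(2 * R)) with hrr_def
  have hrr0 : 0 < rr := Real.exp_pos _
  have hrr1 : rr < 1 := by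
    rw [hrr_def, Real.exp_lt_one_iff]
    linarith
  set u : ℕ → ℝ := fun k => ((k : ℝ) + 1) ^ m * rr ^ k with hu_def
  have hu_nonneg : ∀ k, 0 ≤ u k := fun k => by positivity
  have hsumu : Summable u := by
    have h0 : Summable (fun k : ℕ => (k : ℝ) ^ m * rr ^ k) :=
      summable_pow_mul_geometric_of_norm_lt_one m
        (by rw [Real.norm_eq_abs, abs_of_pos hrr0]; exact hrr1)
    have h1 : Summable (fun k : ℕ => ((k + 1 : ℕ) : ℝ) ^ m * rr ^ (k + 1)) :=
      (summable_nat_add_iff 1).2 h0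
    refine (h1.mul_left rr⁻¹).congr fun k => ?_
    rw [hu_def]
    push_cast
    field_simp
    ring
  set U : ℝ := ∑' k, u k with hU_def
  have hU1 : 1 ≤ U := by
    have h0 : u 0 = 1 := by simp [hu_def]
    rw [← h0, hU_def]
    exact Summable.le_tsum hsumu 0 fun j _ => hu_nonneg j
  refine ⟨Real.exp (-(2 * R)) * Cl, D * U, by positivity, by positivity, ?_⟩
  intro z hz
  rw [hmR]
  set t : ℝ := ‖z‖ with ht_def
  have ht0 : 0 < t := lt_trans one_pos hz
  have hsqt : (0:ℝ) < Real.sqrt t := Real.sqrt_pos.2 ht0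
  -- the real linear functional
  set w : EuclideanSpace ℂ (Fin n) :=
    (WithLp.equiv 2 (Fin n → ℂ)).symm (fun i => conj (z i)) with hw_def
  have hw_norm : ‖w‖ = t := by
    rw [ht_def, EuclideanSpace.norm_eq, EuclideanSpace.norm_eq]
    congr 1
    apply Finset.sum_congr rfl
    intro i _
    rw [hw_def, WithLp.equiv_symm_apply, PiLp.toLp_apply, RCLike.norm_conj]
  set φ : EuclideanSpace ℂ (Fin n) → ℝ := fun ζ => (inner (𝕜 := ℝ) w ζ : ℝ) with hφ_def
  have hφ_eq : ∀ ζ : EuclideanSpace ℂ (Fin n), (∑ i, ζ i * z i).re = φ ζ := by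
    intro ζ
    rw [hφ_def]
    simp only [PiLp.inner_apply]
    rw [Complex.re_sum]
    apply Finset.sum_congr rfl
    intro i _
    rw [hw_def, WithLp.equiv_symm_apply, PiLp.toLp_apply]
    simp [Complex.inner, mul_comm]
  have hφ_cont : Continuous φ := Continuous.inner continuous_const continuous_id
  set F : EuclideanSpace ℂ (Fin n) → ℝ := fun ζ => Real.exp (2 * φ ζ) with hF_def
  have hF_cont : Continuous F := Real.continuous_exp.comp (continuous_const.mul hφ_cont)
  set I : ℝ≥0∞ := ∫⁻ ζ in S, ENNReal.ofReal (F ζ) ∂(μH[(m : ℝ)]) with hI_def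
  -- the Bochner integral equals I.toReal
  have hInt_eq : (∫ ζ in S, Real.exp (2 * (∑ i, ζ i * z i).re) ∂(μH[(m : ℝ)])) = I.toReal := by
    have : (∫ ζ in S, Real.exp (2 * (∑ i, ζ i * z i).re) ∂(μH[(m : ℝ)])) =
        ∫ ζ in S, F ζ ∂(μH[(m : ℝ)]) := by
      apply integral_congr_ae
      apply Filter.Eventually.of_forall
      intro ζ
      simp only [hF_def, hφ_eq ζ]
    rw [this, integral_eq_lintegral_of_nonneg_ae
      (Filter.Eventually.of_forall fun ζ => (Real.exp_pos _).le)
      hF_cont.aestronglyMeasurable, hI_def]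
  -- the unit direction
  set e : EuclideanSpace ℂ (Fin n) := t⁻¹ • w with he_def
  have he_norm : ‖e‖ = 1 := by
    rw [he_def, norm_smul, hw_norm, norm_inv, Real.norm_eq_abs, abs_of_pos ht0,
      inv_mul_cancel₀ ht0.ne']
  have hinner_e : ∀ ζ, (inner (𝕜 := ℝ) e ζ : ℝ) = t⁻¹ * φ ζ := by
    intro ζ
    rw [he_def, real_inner_smul_left, hφ_def]
  ----------------------------------------------------------------
  -- UPPER BOUND
  ----------------------------------------------------------------
  set A : ℕ → Set (EuclideanSpace ℂ (Fin n)) := fun k =>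
    S ∩ {ζ | φ ζ ∈ Set.Ioc (R * t - R * (k + 1)) (R * t - R * k)} with hA_def
  have hcover : S ⊆ ⋃ k, A k := by
    intro ζ hζ
    have hζn : ‖ζ‖ = R := by rwa [hS_def, mem_sphere_zero_iff_norm] at hζ
    have hub : φ ζ ≤ R * t := by
      have := real_inner_le_norm w ζ
      rw [hw_norm, hζn] at this
      rw [hφ_def]
      calc (inner (𝕜 := ℝ) w ζ : ℝ) ≤ t * R := this
        _ = R * t := mul_comm t R
    have hnn : 0 ≤ (R * t - φ ζ) / R := div_nonneg (by linarith) hR.le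
    set k : ℕ := ⌊(R * t - φ ζ) / R⌋₊ with hk_def
    refine Set.mem_iUnion.2 ⟨k, hζ, ?_, ?_⟩
    · have h2 : (R * t - φ ζ) / R < k + 1 := Nat.lt_floor_add_one _
      have h3 : R * t - φ ζ < R * (k + 1) := by
        rw [div_lt_iff₀ hR] at h2
        linarith
      linarith
    · have h1 : (k : ℝ) ≤ (R * t - φ ζ) / R := Nat.floor_le hnn
      have h2 : R * k ≤ R * t - φ ζ := by
        rw [le_div_iff₀ hR] at h1
        linarith
      linarith
  have hAsub : ∀ k : ℕ, A k ⊆ Stmt7Aux.capG n e R (((k : ℝ) + 1) / t) := by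
    intro k ζ hζ
    obtain ⟨hζS, hφζ⟩ := hζ
    have hζn : ‖ζ‖ = R := by rwa [hS_def, mem_sphere_zero_iff_norm] at hζS
    refine ⟨hζn, ?_⟩
    rw [hinner_e]
    have h1 : R * t - R * (k + 1) < φ ζ := hφζ.1
    have h2 : t⁻¹ * (R * t - R * ((k : ℝ) + 1)) = R - R * (((k : ℝ) + 1) / t) := by
      field_simp
    calc R - R * (((k : ℝ) + 1) / t) = t⁻¹ * (R * t - R * ((k : ℝ) + 1)) := h2.symm
      _ ≤ t⁻¹ * φ ζ := by
          apply mul_le_mul_of_nonneg_left h1.le (inv_pos.2 ht0).le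
  -- per-layer bound
  have hterm : ∀ k : ℕ,
      (∫⁻ ζ in A k, ENNReal.ofReal (F ζ) ∂(μH[(m : ℝ)])) ≤
        ENNReal.ofReal (Real.exp (2 * R * t) * rr ^ k * D *
          Real.sqrt ((k : ℝ) + 1) ^ m * (Real.sqrt t)⁻¹ ^ m) := by
    intro k
    have hconst : ∀ ζ ∈ A k, ENNReal.ofReal (F ζ) ≤
        ENNReal.ofReal (Real.exp (2 * (R * t - R * k))) := by
      intro ζ hζ
      apply ENNReal.ofReal_le_ofReal
      rw [hF_def]
      apply Real.exp_le_exp.2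
      have := hζ.2.2
      linarith
    have h1 : (∫⁻ ζ in A k, ENNReal.ofReal (F ζ) ∂(μH[(m : ℝ)])) ≤
        ENNReal.ofReal (Real.exp (2 * (R * t - R * k))) * μH[(m : ℝ)] (A k) := by
      calc (∫⁻ ζ in A k, ENNReal.ofReal (F ζ) ∂(μH[(m : ℝ)]))
          ≤ ∫⁻ _ζ in A k, ENNReal.ofReal (Real.exp (2 * (R * t - R * k))) ∂(μH[(m : ℝ)]) :=
            setLIntegral_mono measurable_const hconst
        _ = _ := setLIntegral_const _ _
    have hexp_split : Real.exp (2 * (R * t - R * k)) = Real.exp (2 * R * t) * rr ^ k := by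
      rw [hrr_def, ← Real.exp_nat_mul, ← Real.exp_add]
      congr 1
      ring
    -- measure of the layer
    have hmeas : μH[(m : ℝ)] (A k) ≤
        ENNReal.ofReal (D * Real.sqrt ((k : ℝ) + 1) ^ m * (Real.sqrt t)⁻¹ ^ m) := by
      by_cases hcase : 4 * ((k : ℝ) + 1) ≤ t
      · -- small k: use the cap bound
        set δk : ℝ := ((k : ℝ) + 1) / t with hδk_def
        have hδk0 : 0 < δk := by positivity
        have hδk4 : δk ≤ 1 / 4 := by
          rw [hδk_def, div_le_iff₀ ht0]
          linarith
        have hsqδ : Real.sqrt δk = Real.sqrt ((k : ℝ) + 1) * (Real.sqrt t)⁻¹ := by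
          rw [hδk_def, div_eq_mul_inv, Real.sqrt_mul (by positivity), Real.sqrt_inv]
        calc μH[(m : ℝ)] (A k) ≤ μH[(m : ℝ)] (Stmt7Aux.capG n e R δk) :=
              measure_mono (hAsub k)
          _ = μH[(m : ℝ)] (Stmt7Aux.capV m R δk) := Stmt7Aux.capG_measure n m hm1 e he_norm R δk
          _ ≤ ENNReal.ofReal ((8 * R * Real.sqrt m * Real.sqrt δk) ^ m) :=
              Stmt7Aux.capV_upper m hR hδk0 hδk4
          _ ≤ ENNReal.ofReal (D * Real.sqrt ((k : ℝ) + 1) ^ m * (Real.sqrt t)⁻¹ ^ m) := by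
              apply ENNReal.ofReal_le_ofReal
              rw [hsqδ]
              have e1 : (8 * R * Real.sqrt m * (Real.sqrt ((k : ℝ) + 1) * (Real.sqrt t)⁻¹)) ^ m =
                  Cu * Real.sqrt ((k : ℝ) + 1) ^ m * (Real.sqrt t)⁻¹ ^ m := by
                rw [hCu_def, ← mul_pow, ← mul_pow]
                ring_nf
              rw [e1]
              have hCuD : Cu ≤ D := by
                rw [hD_def]
                nlinarith [hsS0, pow_pos (by norm_num : (0:ℝ) < 2) m]
              apply mul_le_mul_of_nonneg_right _ (by positivity)
              apply mul_le_mul_of_nonneg_right hCuD (by positivity)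
      · -- large k: use the total measure of the sphere
        push_neg at hcase
        have hsq_le : Real.sqrt t ≤ 2 * Real.sqrt ((k : ℝ) + 1) := by
          have h1 : Real.sqrt t ≤ Real.sqrt (4 * ((k : ℝ) + 1)) := Real.sqrt_le_sqrt hcase.le
          have h2 : Real.sqrt (4 * ((k : ℝ) + 1)) = 2 * Real.sqrt ((k : ℝ) + 1) := by
            rw [Real.sqrt_mul (by norm_num), show (4:ℝ) = 2 ^ 2 by norm_num,
              Real.sqrt_sq (by norm_num)]
          linarith
        have hone : 1 ≤ (2 * Real.sqrt ((k : ℝ) + 1) * (Real.sqrt t)⁻¹) ^ m := by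
          apply one_le_pow₀
          have hstep : Real.sqrt t * (Real.sqrt t)⁻¹ ≤
              2 * Real.sqrt ((k : ℝ) + 1) * (Real.sqrt t)⁻¹ :=
            mul_le_mul_of_nonneg_right hsq_le (by positivity)
          rwa [mul_inv_cancel₀ hsqt.ne'] at hstep
        calc μH[(m : ℝ)] (A k) ≤ μH[(m : ℝ)] S := measure_mono Set.inter_subset_left
          _ = ENNReal.ofReal sS := by
              rw [hsS_def, ENNReal.ofReal_toReal hSfin.ne]
          _ ≤ ENNReal.ofReal (D * Real.sqrt ((k : ℝ) + 1) ^ m * (Real.sqrt t)⁻¹ ^ m) := by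
              apply ENNReal.ofReal_le_ofReal
              calc sS = sS * 1 := (mul_one _).symm
                _ ≤ sS * (2 * Real.sqrt ((k : ℝ) + 1) * (Real.sqrt t)⁻¹) ^ m :=
                    mul_le_mul_of_nonneg_left hone hsS0
                _ = (sS * 2 ^ m) * Real.sqrt ((k : ℝ) + 1) ^ m * (Real.sqrt t)⁻¹ ^ m := by
                    rw [mul_pow, mul_pow]; ring
                _ ≤ D * Real.sqrt ((k : ℝ) + 1) ^ m * (Real.sqrt t)⁻¹ ^ m := by
                    have : sS * 2 ^ m ≤ D := by
                      rw [hD_def]; nlinarith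
                    apply mul_le_mul_of_nonneg_right _ (by positivity)
                    apply mul_le_mul_of_nonneg_right this (by positivity)
    calc (∫⁻ ζ in A k, ENNReal.ofReal (F ζ) ∂(μH[(m : ℝ)]))
        ≤ ENNReal.ofReal (Real.exp (2 * (R * t - R * k))) * μH[(m : ℝ)] (A k) := h1
      _ ≤ ENNReal.ofReal (Real.exp (2 * (R * t - R * k))) *
            ENNReal.ofReal (D * Real.sqrt ((k : ℝ) + 1) ^ m * (Real.sqrt t)⁻¹ ^ m) :=
          mul_le_mul_right hmeas _
      _ = ENNReal.ofReal (Real.exp (2 * R * t) * rr ^ k * D *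
            Real.sqrt ((k : ℝ) + 1) ^ m * (Real.sqrt t)⁻¹ ^ m) := by
          rw [← ENNReal.ofReal_mul (Real.exp_pos _).le, hexp_split]
          congr 1
          ring
  -- sum up
  set c : ℝ := Real.exp (2 * R * t) * D * (Real.sqrt t)⁻¹ ^ m with hc_def
  have hc0 : 0 ≤ c := by positivity
  set v : ℕ → ℝ := fun k => rr ^ k * Real.sqrt ((k : ℝ) + 1) ^ m with hv_def
  have hv_nonneg : ∀ k, 0 ≤ v k := fun k => by positivity
  have hvu : ∀ k, v k ≤ u k := by
    intro k
    rw [hv_def, hu_def]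
    have h1 : Real.sqrt ((k : ℝ) + 1) ^ m ≤ ((k : ℝ) + 1) ^ m := by
      apply pow_le_pow_left₀ (Real.sqrt_nonneg _)
      nlinarith [Real.sq_sqrt (by positivity : (0:ℝ) ≤ (k : ℝ) + 1),
        Real.sqrt_nonneg ((k : ℝ) + 1)]
    calc rr ^ k * Real.sqrt ((k : ℝ) + 1) ^ m ≤ rr ^ k * ((k : ℝ) + 1) ^ m :=
          mul_le_mul_of_nonneg_left h1 (by positivity)
      _ = ((k : ℝ) + 1) ^ m * rr ^ k := mul_comm _ _
  have hsumv : Summable v := Summable.of_nonneg_of_le hv_nonneg hvu hsumu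
  have hIupper : I ≤ ENNReal.ofReal (c * U) := by
    calc I ≤ ∫⁻ ζ in ⋃ k, A k, ENNReal.ofReal (F ζ) ∂(μH[(m : ℝ)]) :=
          lintegral_mono_set hcover
      _ ≤ ∑' k, ∫⁻ ζ in A k, ENNReal.ofReal (F ζ) ∂(μH[(m : ℝ)]) :=
          lintegral_iUnion_le _ _
      _ ≤ ∑' k, ENNReal.ofReal (c * v k) := by
          apply ENNReal.tsum_le_tsum
          intro k
          refine (hterm k).trans_eq ?_
          rw [hc_def, hv_def]
          congr 1
          ring
      _ = ENNReal.ofReal (∑' k, c * v k) := by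
          rw [ENNReal.ofReal_tsum_of_nonneg (fun k => by positivity) (hsumv.mul_left c)]
      _ ≤ ENNReal.ofReal (c * U) := by
          apply ENNReal.ofReal_le_ofReal
          rw [tsum_mul_left]
          apply mul_le_mul_of_nonneg_left _ hc0
          rw [hU_def]
          exact Summable.tsum_le_tsum hvu hsumv hsumu
  ----------------------------------------------------------------
  -- LOWER BOUND
  ----------------------------------------------------------------
  set δ : ℝ := t⁻¹ with hδ_def
  have hδ0 : 0 < δ := inv_pos.2 ht0
  have hδ1 : δ ≤ 1 := by
    rw [hδ_def]
    exact inv_le_one_of_one_le₀ hz.le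
  have hcapS : Stmt7Aux.capG n e R δ ⊆ S := by
    rintro ζ ⟨h1, _⟩
    rw [hS_def, mem_sphere_zero_iff_norm]
    exact h1
  have hFlow : ∀ ζ ∈ Stmt7Aux.capG n e R δ,
      ENNReal.ofReal (Real.exp (2 * R * t) * Real.exp (-(2 * R))) ≤ ENNReal.ofReal (F ζ) := by
    rintro ζ ⟨h1, h2⟩
    apply ENNReal.ofReal_le_ofReal
    rw [hF_def, ← Real.exp_add]
    apply Real.exp_le_exp.2
    have h3 : (inner (𝕜 := ℝ) e ζ : ℝ) = t⁻¹ * φ ζ := hinner_e ζ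
    have h4 : R - R * δ ≤ t⁻¹ * φ ζ := by rw [← h3]; exact h2
    have h5 : t * (R - R * δ) ≤ φ ζ := by
      have hstep := mul_le_mul_of_nonneg_left h4 ht0.le
      rwa [← mul_assoc, mul_inv_cancel₀ ht0.ne', one_mul] at hstep
    have h6 : t * (R - R * δ) = R * t - R := by
      rw [hδ_def]
      field_simp
    linarith
  have hIlower : ENNReal.ofReal (Real.exp (2 * R * t) * Real.exp (-(2 * R)) * Cl *
      (Real.sqrt t)⁻¹ ^ m) ≤ I := by
    have hsqδ : Real.sqrt δ = (Real.sqrt t)⁻¹ := by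
      rw [hδ_def, Real.sqrt_inv]
    have hcap_lb : ENNReal.ofReal (Cl * (Real.sqrt t)⁻¹ ^ m) ≤
        μH[(m : ℝ)] (Stmt7Aux.capG n e R δ) := by
      rw [Stmt7Aux.capG_measure n m hm1 e he_norm R δ]
      have := Stmt7Aux.capV_lower m hm_pos hR hδ0 hδ1
      rw [hsqδ] at this
      rw [hCl_def]
      exact this
    calc ENNReal.ofReal (Real.exp (2 * R * t) * Real.exp (-(2 * R)) * Cl * (Real.sqrt t)⁻¹ ^ m)
        = ENNReal.ofReal (Real.exp (2 * R * t) * Real.exp (-(2 * R))) *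
            ENNReal.ofReal (Cl * (Real.sqrt t)⁻¹ ^ m) := by
          rw [← ENNReal.ofReal_mul (by positivity)]
          congr 1
          ring
      _ ≤ ENNReal.ofReal (Real.exp (2 * R * t) * Real.exp (-(2 * R))) *
            μH[(m : ℝ)] (Stmt7Aux.capG n e R δ) := mul_le_mul_right hcap_lb _
      _ = ∫⁻ _ζ in Stmt7Aux.capG n e R δ,
            ENNReal.ofReal (Real.exp (2 * R * t) * Real.exp (-(2 * R))) ∂(μH[(m : ℝ)]) :=
          (setLIntegral_const _ _).symm
      _ ≤ ∫⁻ ζ in Stmt7Aux.capG n e R δ, ENNReal.ofReal (F ζ) ∂(μH[(m : ℝ)]) :=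
          setLIntegral_mono (hF_cont.measurable.ennreal_ofReal) hFlow
      _ ≤ I := lintegral_mono_set hcapS
  ----------------------------------------------------------------
  -- CONCLUSION
  ----------------------------------------------------------------
  have hpow : (Real.sqrt t)⁻¹ ^ m = t ^ (-((n : ℝ) - 1 / 2)) := by
    have h1 : (Real.sqrt t)⁻¹ ^ m = (Real.sqrt t ^ m)⁻¹ := by rw [inv_pow]
    have h2 : Real.sqrt t ^ m = t ^ ((m : ℝ) / 2) := by
      rw [Real.sqrt_eq_rpow, ← Real.rpow_natCast (t ^ (1 / (2:ℝ))) m, ← Real.rpow_mul ht0.le]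
      congr 1
      ring
    rw [h1, h2, ← Real.rpow_neg ht0.le]
    congr 1
    rw [← hmR]
    ring
  have hIne : I ≠ ⊤ := (lt_of_le_of_lt hIupper ENNReal.ofReal_lt_top).ne
  rw [hInt_eq]
  constructor
  · -- lower
    have h1 : Real.exp (-(2 * R)) * Cl * Real.exp (2 * R * t) * t ^ (-((n : ℝ) - 1 / 2)) =
        Real.exp (2 * R * t) * Real.exp (-(2 * R)) * Cl * (Real.sqrt t)⁻¹ ^ m := by
      rw [hpow]; ring
    rw [h1]
    have h2 := ENNReal.toReal_mono hIne hIlower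
    rwa [ENNReal.toReal_ofReal (by positivity)] at h2
  · -- upper
    have h2 := ENNReal.toReal_mono ENNReal.ofReal_ne_top hIupper
    rw [ENNReal.toReal_ofReal (by positivity)] at h2
    refine h2.trans ?_
    rw [hc_def, hU_def, hpow]
    apply le_of_eq
    ring
end

section
/- Let (a_{m₁,m₂}) be a family of complex numbers indexed by ℕ² with a_{m₁,m₂} = 0 unless m₁ = m₂ = k for some integer k > 1, and a_{k,k} = 2^{2k} k!² (4k+1)! / (k^{3/4} (2k)!² Γ(4k+5/2)^{1/2}). Then the series Σ_{(m₁,m₂)∈ℕ²} |a_{m₁,m₂}|² · (2m₁)!(2m₂)!/(2m₁+2m₂+1)! diverges. -/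
set_option maxHeartbeats 1000000

open Real

lemma gamma_half_sq_le {x : ℝ} (hx : 0 < x) :
    Real.Gamma (x + 1 / 2) ^ 2 ≤ Real.Gamma x * Real.Gamma (x + 1) := by
  have hc := Real.convexOn_log_Gamma.2 (Set.mem_Ioi.mpr hx)
    (Set.mem_Ioi.mpr (by linarith : (0:ℝ) < x + 1))
    (by norm_num : (0:ℝ) ≤ 1/2) (by norm_num : (0:ℝ) ≤ 1/2) (by norm_num)
  simp only [smul_eq_mul, Function.comp_apply] at hc
  rw [show (1/2:ℝ) * x + (1/2) * (x+1) = x + 1/2 by ring] at hc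
  have h1 : 0 < Real.Gamma (x + 1/2) := Real.Gamma_pos_of_pos (by linarith)
  have h2 : 0 < Real.Gamma x := Real.Gamma_pos_of_pos hx
  have h3 : 0 < Real.Gamma (x + 1) := Real.Gamma_pos_of_pos (by linarith)
  have key : 2 * Real.log (Real.Gamma (x + 1/2)) ≤
      Real.log (Real.Gamma x) + Real.log (Real.Gamma (x+1)) := by linarith
  calc Real.Gamma (x + 1/2) ^ 2
      = Real.exp (2 * Real.log (Real.Gamma (x + 1/2))) := by
        rw [two_mul, Real.exp_add, Real.exp_log h1, sq]
    _ ≤ Real.exp (Real.log (Real.Gamma x) + Real.log (Real.Gamma (x+1))) :=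
        Real.exp_le_exp.mpr key
    _ = Real.Gamma x * Real.Gamma (x+1) := by
        rw [Real.exp_add, Real.exp_log h2, Real.exp_log h3]

lemma key_bound (k : ℕ) (hk : 2 ≤ k) :
    π / Real.sqrt 6 * (1 / (k:ℝ)) ≤
      (((2 : ℝ) ^ (2 * k) * (k.factorial : ℝ) ^ 2 * ((4 * k + 1).factorial : ℝ)) /
        ((k : ℝ) ^ ((3 : ℝ) / 4) * ((2 * k).factorial : ℝ) ^ 2 *
          Real.sqrt (Real.Gamma (4 * k + 5 / 2)))) ^ 2 *
      (((2 * k).factorial : ℝ) * ((2 * k).factorial : ℝ) /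
        ((2 * k + 2 * k + 1).factorial : ℝ)) := by
  set K : ℝ := (k : ℝ) with hKdef
  have hK2 : (2:ℝ) ≤ K := by rw [hKdef]; exact_mod_cast hk
  have hK0 : (0:ℝ) < K := by linarith
  set A : ℝ := Real.Gamma (K + 1/2) with hAdef
  set B : ℝ := Real.Gamma (K + 1) with hBdef
  set C : ℝ := Real.Gamma (4*K + 2) with hCdef
  set G : ℝ := Real.Gamma (4*K + 5/2) with hGdef
  have hA : 0 < A := Real.Gamma_pos_of_pos (by linarith)
  have hB : 0 < B := Real.Gamma_pos_of_pos (by linarith)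
  have hC : 0 < C := Real.Gamma_pos_of_pos (by linarith)
  have hG : 0 < G := Real.Gamma_pos_of_pos (by linarith)
  set P : ℝ := (2:ℝ) ^ ((2*K : ℝ)) with hPdef
  have hP : 0 < P := Real.rpow_pos_of_pos two_pos _
  have hπ : (0:ℝ) < π := Real.pi_pos
  have hsπ : (0:ℝ) < Real.sqrt π := Real.sqrt_pos.mpr hπ
  -- factorial identities
  have hfacB : (k.factorial : ℝ) = B := by
    rw [hBdef, hKdef]; exact (Real.Gamma_nat_eq_factorial k).symm
  have hfacC : ((4 * k + 1).factorial : ℝ) = C := by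
    rw [hCdef, hKdef, show 4*(k:ℝ) + 2 = ((4*k+1 : ℕ):ℝ) + 1 by push_cast; ring]
    exact (Real.Gamma_nat_eq_factorial _).symm
  have hdup := Real.Gamma_mul_Gamma_add_half (K + 1/2)
  rw [show K + 1/2 + 1/2 = K + 1 by ring, show 2*(K + 1/2) = 2*K + 1 by ring,
    show (1:ℝ) - (2*K + 1) = -(2*K) by ring] at hdup
  have hfac2 : Real.Gamma (2*K + 1) = ((2*k).factorial : ℝ) := by
    rw [show 2*K+1 = ((2*k : ℕ):ℝ) + 1 by push_cast; ring]
    exact Real.Gamma_nat_eq_factorial _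
  rw [hfac2] at hdup
  -- hdup : A * B = (2k)! * 2^(-(2K)) * √π
  have h2K : (2:ℝ) ^ (-(2*K)) * P = 1 := by
    rw [hPdef, ← Real.rpow_add two_pos]; norm_num
  have hfac2' : ((2*k).factorial : ℝ) = A * B * P / Real.sqrt π := by
    field_simp
    linear_combination (-P) * hdup - (((2*k).factorial : ℝ) * Real.sqrt π) * h2K
  -- nat pow to rpow
  have hpow : (2:ℝ) ^ (2 * k) = P := by
    rw [hPdef, show (2*K : ℝ) = ((2*k : ℕ):ℝ) by push_cast; ring, Real.rpow_natCast]
  -- rpow facts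
  have h34 : ((K:ℝ) ^ ((3:ℝ)/4)) ^ 2 = K ^ ((3:ℝ)/2) := by
    rw [← Real.rpow_natCast (K ^ ((3:ℝ)/4)) 2, ← Real.rpow_mul hK0.le]; norm_num
  have h32 : K ^ ((3:ℝ)/2) = K * Real.sqrt K := by
    rw [Real.sqrt_eq_rpow, show (3:ℝ)/2 = 1 + 1/2 by norm_num, Real.rpow_add hK0,
      Real.rpow_one]
  have hsqG : Real.sqrt G ^ 2 = G := Real.sq_sqrt hG.le
  have hsqπ : Real.sqrt π ^ 2 = π := Real.sq_sqrt hπ.le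
  have hsG : 0 < Real.sqrt G := Real.sqrt_pos.mpr hG
  have h234 : (0:ℝ) < K ^ ((3:ℝ)/4) := Real.rpow_pos_of_pos hK0 _
  have h232 : (0:ℝ) < K ^ ((3:ℝ)/2) := Real.rpow_pos_of_pos hK0 _
  have hfact : (0:ℝ) < ((2*k).factorial : ℝ) := by positivity
  -- the index arithmetic
  have hidx : 2 * k + 2 * k + 1 = 4 * k + 1 := by ring
  rw [hidx, hpow, hfacB, hfacC, hfac2']
  -- main value computation
  have hval : ((P * B ^ 2 * C) /
        (K ^ ((3:ℝ)/4) * (A * B * P / Real.sqrt π) ^ 2 * Real.sqrt G)) ^ 2 *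
      ((A * B * P / Real.sqrt π) * (A * B * P / Real.sqrt π) / C)
      = π * B ^ 2 * C / (K ^ ((3:ℝ)/2) * A ^ 2 * G) := by
    rw [← h34, ← hsqG, ← hsqπ]
    field_simp
    rw [Real.sqrt_sq hsπ.le, Real.sqrt_sq hsG.le]
  rw [hval]
  -- bounds
  have hA2 : A ^ 2 * K ≤ B ^ 2 := by
    have h := gamma_half_sq_le hK0
    have hGK : Real.Gamma (K + 1) = K * Real.Gamma K := Real.Gamma_add_one hK0.ne'
    have hΓK : 0 < Real.Gamma K := Real.Gamma_pos_of_pos hK0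
    calc A ^ 2 * K ≤ (Real.Gamma K * B) * K := by
          apply mul_le_mul_of_nonneg_right _ hK0.le
          rw [hAdef, hBdef]; exact h
      _ = B ^ 2 := by rw [hBdef, hGK]; ring
  have hGb : G ≤ C * Real.sqrt (6 * K) := by
    have h := gamma_half_sq_le (show (0:ℝ) < 4*K + 2 by linarith)
    rw [show 4*K + 2 + 1/2 = 4*K + 5/2 by ring] at h
    have hGam3 : Real.Gamma (4*K + 2 + 1) = (4*K + 2) * C := by
      rw [hCdef]; exact Real.Gamma_add_one (by linarith)
    rw [hGam3] at h
    -- h : G^2 ≤ C * ((4K+2) * C)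
    have h6 : 4*K + 2 ≤ 6*K := by linarith
    have hsq : G ^ 2 ≤ (C * Real.sqrt (6*K)) ^ 2 := by
      have e : (C * Real.sqrt (6*K)) ^ 2 = C^2 * (6*K) := by
        rw [mul_pow, Real.sq_sqrt (by linarith : (0:ℝ) ≤ 6*K)]
      have e1 : C * ((4*K+2) * C) = C^2 * (4*K+2) := by ring
      have e2 : C^2 * (4*K+2) ≤ C^2 * (6*K) :=
        mul_le_mul_of_nonneg_left h6 (sq_nonneg C)
      rw [e]; rw [e1] at h; linarith
    calc G = Real.sqrt (G ^ 2) := (Real.sqrt_sq hG.le).symm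
      _ ≤ Real.sqrt ((C * Real.sqrt (6*K)) ^ 2) := Real.sqrt_le_sqrt hsq
      _ = C * Real.sqrt (6*K) := Real.sqrt_sq (by positivity)
  have hs6K : Real.sqrt (6 * K) = Real.sqrt 6 * Real.sqrt K := by
    rw [← Real.sqrt_mul (by norm_num : (0:ℝ) ≤ 6)]
  rw [hs6K] at hGb
  have hs6 : (0:ℝ) < Real.sqrt 6 := Real.sqrt_pos.mpr (by norm_num)
  have hsK : (0:ℝ) < Real.sqrt K := Real.sqrt_pos.mpr hK0
  rw [show π / Real.sqrt 6 * (1 / K) = π / (Real.sqrt 6 * K) by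
    rw [div_mul_div_comm, mul_one]]
  rw [div_le_div_iff₀ (by positivity) (by positivity)]
  calc π * (K ^ ((3:ℝ)/2) * A ^ 2 * G)
      = π * (K * Real.sqrt K) * A ^ 2 * G := by rw [h32]; ring
    _ ≤ π * (K * Real.sqrt K) * A ^ 2 * (C * (Real.sqrt 6 * Real.sqrt K)) := by
        have hnn : (0:ℝ) ≤ π * (K * Real.sqrt K) * A ^ 2 := by positivity
        exact mul_le_mul_of_nonneg_left hGb hnn
    _ = π * Real.sqrt 6 * C * ((A ^ 2 * K) * (Real.sqrt K * Real.sqrt K)) := by ring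
    _ = π * Real.sqrt 6 * C * ((A ^ 2 * K) * K) := by
        rw [Real.mul_self_sqrt hK0.le]
    _ ≤ π * Real.sqrt 6 * C * (B ^ 2 * K) := by
        have hnn : (0:ℝ) ≤ π * Real.sqrt 6 * C := by positivity
        exact mul_le_mul_of_nonneg_left (mul_le_mul_of_nonneg_right hA2 hK0.le) hnn
    _ = π * B ^ 2 * C * (Real.sqrt 6 * K) := by ring

/-- Divergence of the series Σ |a_{m₁,m₂}|² (2m₁)!(2m₂)!/(2m₁+2m₂+1)! for the
specific diagonal coefficients a_{k,k} = 2^{2k} k!² (4k+1)! / (k^{3/4} (2k)!² Γ(4k+5/2)^{1/2}). -/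
theorem stmt9 (a : ℕ × ℕ → ℂ)
    (hdiag : ∀ k : ℕ, 1 < k →
      a (k, k) = (((2 : ℝ) ^ (2 * k) * (k.factorial : ℝ) ^ 2 *
          ((4 * k + 1).factorial : ℝ)) /
        ((k : ℝ) ^ ((3 : ℝ) / 4) * ((2 * k).factorial : ℝ) ^ 2 *
          Real.sqrt (Real.Gamma (4 * k + 5 / 2))) : ℝ))
    (hoff : ∀ m : ℕ × ℕ, (m.1 ≠ m.2 ∨ m.1 ≤ 1) → a m = 0) :
    ¬ Summable (fun m : ℕ × ℕ => ‖a m‖ ^ 2 *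
      (((2 * m.1).factorial : ℝ) * ((2 * m.2).factorial : ℝ) /
        ((2 * m.1 + 2 * m.2 + 1).factorial : ℝ))) := by
  intro hsum
  have hinj : Function.Injective (fun k : ℕ => ((k, k) : ℕ × ℕ)) := by
    intro x y h; exact (Prod.ext_iff.mp h).1
  have hdsum : Summable (fun k : ℕ => ‖a (k, k)‖ ^ 2 *
      (((2 * k).factorial : ℝ) * ((2 * k).factorial : ℝ) /
        ((2 * k + 2 * k + 1).factorial : ℝ))) := hsum.comp_injective hinj
  have hdsum2 : Summable (fun k : ℕ => ‖a (k + 2, k + 2)‖ ^ 2 *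
      (((2 * (k + 2)).factorial : ℝ) * ((2 * (k + 2)).factorial : ℝ) /
        ((2 * (k + 2) + 2 * (k + 2) + 1).factorial : ℝ))) :=
    (summable_nat_add_iff 2).mpr hdsum
  have hcmp : Summable (fun k : ℕ => π / Real.sqrt 6 * (1 / ((k : ℝ) + 2))) := by
    apply Summable.of_nonneg_of_le _ _ hdsum2
    · intro n; positivity
    · intro n
      have hb := key_bound (n + 2) (by omega)
      rw [hdiag (n + 2) (by omega)]
      rw [Complex.norm_real, Real.norm_eq_abs, sq_abs]
      calc π / Real.sqrt 6 * (1 / ((n : ℝ) + 2))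
          = π / Real.sqrt 6 * (1 / ((n + 2 : ℕ) : ℝ)) := by push_cast; ring_nf
        _ ≤ _ := hb
  have hc : (π / Real.sqrt 6 : ℝ) ≠ 0 := by
    have : (0:ℝ) < Real.sqrt 6 := Real.sqrt_pos.mpr (by norm_num)
    positivity
  have h1 : Summable (fun k : ℕ => 1 / ((k : ℝ) + 2)) :=
    (summable_mul_left_iff hc).mp hcmp
  have h2 : Summable (fun k : ℕ => 1 / (((k + 2 : ℕ)) : ℝ)) := by
    simpa [Nat.cast_add] using h1
  exact Real.not_summable_one_div_natCast ((summable_nat_add_iff 2).mp h2)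
end
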